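/- Eckart–Young theorem (Frobenius norm): for A ∈ ℝ^{m×n} and any matrix B of rank at most k, ‖A − B‖_F² ≥ Σ_{j=k+1}^{ρ} σⱼ(A)², where ρ = rank(A), with equality attained by the rank-k truncated SVD. -/

import Mathlib

open Matrix
noncomputable def specNorm {m n : Type*} [Fintype m] [Fintype n] [DecidableEq n]
    (A : Matrix m n ℝ) : ℝ :=
  ‖LinearMap.toContinuousLinearMap (Matrix.toEuclideanLin A)‖

noncomputable def frobNorm {m n : Type*} [Fintype m] [Fintype n]
    (A : Matrix m n ℝ) : ℝ :=
  Real.sqrt (∑ i, ∑ j, (A i j) ^ 2)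

/-- The `j`-th largest singular value of `A` (1-indexed), characterized as the
distance in spectral norm from `A` to the set of matrices of rank `< j`. -/
noncomputable def sval {m n : Type*} [Fintype m] [Fintype n] [DecidableEq n]
    (A : Matrix m n ℝ) (j : ℕ) : ℝ :=
  sInf { c | ∃ B : Matrix m n ℝ, B.rank < j ∧ specNorm (A - B) = c }


section EYaux
open Finset
variable {m n : ℕ}


variable {m n : ℕ}

noncomputable section EY

def hM (A : Matrix (Fin m) (Fin n) ℝ) : (Aᵀ * A).IsHermitian := by
  have := isHermitian_conjTranspose_mul_self A
  rwa [conjTranspose_eq_transpose_of_trivial] at this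

/-- sorting permutation: eigenvalues in decreasing order -/
def sp (A : Matrix (Fin m) (Fin n) ℝ) : Equiv.Perm (Fin n) :=
  Tuple.sort (fun i => -(hM A).eigenvalues i)

def sμ (A : Matrix (Fin m) (Fin n) ℝ) (i : Fin n) : ℝ := (hM A).eigenvalues (sp A i)

def sw (A : Matrix (Fin m) (Fin n) ℝ) (i : Fin n) : Fin n → ℝ :=
  ⇑((hM A).eigenvectorBasis (sp A i))

lemma psdM (A : Matrix (Fin m) (Fin n) ℝ) : (Aᵀ * A).PosSemidef := by
  rw [← conjTranspose_eq_transpose_of_trivial]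
  exact posSemidef_conjTranspose_mul_self A

lemma sμ_nonneg (A : Matrix (Fin m) (Fin n) ℝ) (i : Fin n) : 0 ≤ sμ A i :=
  (psdM A).eigenvalues_nonneg (sp A i)

lemma sμ_antitone (A : Matrix (Fin m) (Fin n) ℝ) : Antitone (sμ A) := by
  intro i j hij
  have h := Tuple.monotone_sort (fun i => -(hM A).eigenvalues i) hij
  simp only [Function.comp_apply] at h
  have : -(sμ A i) ≤ -(sμ A j) := h
  linarith

end EY

section EY2
variable (A : Matrix (Fin m) (Fin n) ℝ)

lemma sw_dot (i j : Fin n) : sw A i ⬝ᵥ sw A j = if i = j then 1 else 0 := by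
  have hb := (hM A).eigenvectorBasis.orthonormal
  rw [orthonormal_iff_ite] at hb
  have h := hb (sp A i) (sp A j)
  simp only [PiLp.inner_apply, RCLike.inner_apply, conj_trivial] at h
  simp only [EmbeddingLike.apply_eq_iff_eq] at h
  simpa [sw, dotProduct, mul_comm] using h

lemma M_mulVec_sw (i : Fin n) : (Aᵀ * A) *ᵥ sw A i = sμ A i • sw A i :=
  (hM A).mulVec_eigenvectorBasis (sp A i)

lemma dot_mulVec_mulVec (x y : Fin n → ℝ) :
    (A *ᵥ x) ⬝ᵥ (A *ᵥ y) = x ⬝ᵥ ((Aᵀ * A) *ᵥ y) := by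
  conv_rhs => rw [← mulVec_mulVec, dotProduct_mulVec, vecMul_transpose]

lemma sAw_dot (i j : Fin n) :
    (A *ᵥ sw A i) ⬝ᵥ (A *ᵥ sw A j) = if i = j then sμ A i else 0 := by
  rw [dot_mulVec_mulVec, M_mulVec_sw, dotProduct_smul, sw_dot]
  by_cases h : i = j <;> simp [h, smul_eq_mul, mul_comm]

end EY2

lemma dot_sum_sum {ι κ : Type*} [Fintype ι] [DecidableEq ι] [Fintype κ]
    (u : ι → (κ → ℝ)) (g : ι → ℝ)
    (hu : ∀ i j, u i ⬝ᵥ u j = if i = j then g i else 0) (c c' : ι → ℝ) :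
    (∑ i, c i • u i) ⬝ᵥ (∑ j, c' j • u j) = ∑ i, c i * c' i * g i := by
  calc (∑ i, c i • u i) ⬝ᵥ (∑ j, c' j • u j)
      = ∑ a, ∑ i, ∑ j, (c i * c' j) * (u i a * u j a) := by
        simp only [dotProduct, Finset.sum_apply, Pi.smul_apply, smul_eq_mul]
        refine Finset.sum_congr rfl fun a _ => ?_
        rw [Finset.sum_mul_sum]
        exact Finset.sum_congr rfl fun i _ => Finset.sum_congr rfl fun j _ => by ring
    _ = ∑ i, ∑ j, (c i * c' j) * (u i ⬝ᵥ u j) := by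
        rw [Finset.sum_comm]
        refine Finset.sum_congr rfl fun i _ => ?_
        rw [Finset.sum_comm]
        refine Finset.sum_congr rfl fun j _ => ?_
        rw [dotProduct, Finset.mul_sum]
    _ = ∑ i, c i * c' i * g i := by
        simp only [hu, mul_ite, mul_zero]
        refine Finset.sum_congr rfl fun i _ => ?_
        rw [Finset.sum_ite_eq, if_pos (Finset.mem_univ i)]

section EY3
variable (A : Matrix (Fin m) (Fin n) ℝ)

lemma sw_expansion (x : Fin n → ℝ) : ∑ i, (sw A i ⬝ᵥ x) • sw A i = x := by
  classical
  set b := (hM A).eigenvectorBasis with hb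
  have h := b.sum_repr' ((WithLp.equiv 2 (Fin n → ℝ)).symm x)
  have h2 : ∑ i, (inner ℝ (b (sp A i)) ((WithLp.equiv 2 (Fin n → ℝ)).symm x) : ℝ) • b (sp A i)
      = (WithLp.equiv 2 (Fin n → ℝ)).symm x := by
    rw [Equiv.sum_comp (sp A)
      (fun j => (inner ℝ (b j) ((WithLp.equiv 2 (Fin n → ℝ)).symm x) : ℝ) • b j)]
    exact h
  have h3 := congrArg (WithLp.equiv 2 (Fin n → ℝ)) h2
  simpa [PiLp.inner_apply, sw, dotProduct, map_sum, mul_comm] using h3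

lemma parseval (x : Fin n → ℝ) : x ⬝ᵥ x = ∑ i, (sw A i ⬝ᵥ x) ^ 2 := by
  conv_lhs => rw [← sw_expansion A x]
  rw [dot_sum_sum (sw A) (fun _ => 1) (sw_dot A)]
  simp [sq]

lemma mulVec_dot_eq (x : Fin n → ℝ) :
    (A *ᵥ x) ⬝ᵥ (A *ᵥ x) = ∑ i, (sw A i ⬝ᵥ x) ^ 2 * sμ A i := by
  conv_lhs => rw [← sw_expansion A x]
  have hmv : A *ᵥ (∑ i, (sw A i ⬝ᵥ x) • sw A i) = ∑ i, (sw A i ⬝ᵥ x) • (A *ᵥ sw A i) := by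
    simp only [← mulVecLin_apply, map_sum, _root_.map_smul]
  rw [hmv, dot_sum_sum (fun i => A *ᵥ sw A i) (sμ A) (sAw_dot A)]
  exact Finset.sum_congr rfl fun i _ => by ring

end EY3

section Norms
variable (A : Matrix (Fin m) (Fin n) ℝ)

lemma norm_symm_eq (x : Fin n → ℝ) :
    ‖(WithLp.equiv 2 (Fin n → ℝ)).symm x‖ = Real.sqrt (x ⬝ᵥ x) := by
  rw [EuclideanSpace.norm_eq]
  congr 1
  simp [dotProduct, sq_abs, sq]

lemma dot_self_nonneg (x : Fin n → ℝ) : 0 ≤ x ⬝ᵥ x :=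
  Finset.sum_nonneg fun i _ => mul_self_nonneg _

lemma specNorm_nonneg : 0 ≤ specNorm A := by rw [specNorm]; exact norm_nonneg _

lemma specNorm_le_of (c : ℝ) (hc : 0 ≤ c)
    (h : ∀ x : Fin n → ℝ, (A *ᵥ x) ⬝ᵥ (A *ᵥ x) ≤ c ^ 2 * (x ⬝ᵥ x)) :
    specNorm A ≤ c := by
  rw [specNorm]
  refine ContinuousLinearMap.opNorm_le_bound _ hc fun y => ?_
  have hy : y = (WithLp.equiv 2 (Fin n → ℝ)).symm ((WithLp.equiv 2 (Fin n → ℝ)) y) := rfl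
  set x := (WithLp.equiv 2 (Fin n → ℝ)) y with hx
  rw [hy, norm_symm_eq]
  have : (LinearMap.toContinuousLinearMap (toEuclideanLin A))
      ((WithLp.equiv 2 (Fin n → ℝ)).symm x) = (WithLp.equiv 2 (Fin m → ℝ)).symm (A *ᵥ x) := rfl
  rw [this, norm_symm_eq]
  calc Real.sqrt ((A *ᵥ x) ⬝ᵥ (A *ᵥ x)) ≤ Real.sqrt (c ^ 2 * (x ⬝ᵥ x)) :=
        Real.sqrt_le_sqrt (h x)
    _ = c * Real.sqrt (x ⬝ᵥ x) := by
        rw [Real.sqrt_mul (sq_nonneg c), Real.sqrt_sq hc]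

lemma le_specNorm (x : Fin n → ℝ) :
    Real.sqrt ((A *ᵥ x) ⬝ᵥ (A *ᵥ x)) ≤ specNorm A * Real.sqrt (x ⬝ᵥ x) := by
  have h := (LinearMap.toContinuousLinearMap (toEuclideanLin A)).le_opNorm
    ((WithLp.equiv 2 (Fin n → ℝ)).symm x)
  have : (LinearMap.toContinuousLinearMap (toEuclideanLin A))
      ((WithLp.equiv 2 (Fin n → ℝ)).symm x) = (WithLp.equiv 2 (Fin m → ℝ)).symm (A *ᵥ x) := rfl
  rw [specNorm]
  rwa [this, norm_symm_eq, norm_symm_eq] at h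

end Norms

section Frob
variable (A : Matrix (Fin m) (Fin n) ℝ)

noncomputable def Wmat : Matrix (Fin n) (Fin n) ℝ := Matrix.of (sw A)

lemma Wmat_mul_transpose : Wmat A * (Wmat A)ᵀ = 1 := by
  ext i j
  simp only [mul_apply, Wmat, transpose_apply, Matrix.of_apply]
  have := sw_dot A i j
  simpa [dotProduct, one_apply] using this

lemma transpose_mul_Wmat : (Wmat A)ᵀ * Wmat A = 1 :=
  mul_eq_one_comm.mp (Wmat_mul_transpose A)

lemma sum_dot_eq_trace (N : Matrix (Fin n) (Fin n) ℝ) :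
    ∑ i, sw A i ⬝ᵥ (N *ᵥ sw A i) = N.trace := by
  have h1 : ∀ i, sw A i ⬝ᵥ (N *ᵥ sw A i) = (Wmat A * N * (Wmat A)ᵀ) i i := by
    intro i
    simp only [mul_apply, Wmat, transpose_apply, Matrix.of_apply, mulVec, dotProduct,
      Finset.sum_mul, Finset.mul_sum]
    rw [Finset.sum_comm]
    exact Finset.sum_congr rfl fun a _ => Finset.sum_congr rfl fun b _ => by ring
  calc ∑ i, sw A i ⬝ᵥ (N *ᵥ sw A i) = (Wmat A * N * (Wmat A)ᵀ).trace := by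
        rw [Matrix.trace]; exact Finset.sum_congr rfl fun i _ => (h1 i)
    _ = ((Wmat A)ᵀ * Wmat A * N).trace := Matrix.trace_mul_cycle (Wmat A) N (Wmat A)ᵀ
    _ = N.trace := by rw [transpose_mul_Wmat, Matrix.one_mul]

lemma frob_sq_eq (C : Matrix (Fin m) (Fin n) ℝ) :
    frobNorm C ^ 2 = ∑ i, (C *ᵥ sw A i) ⬝ᵥ (C *ᵥ sw A i) := by
  have h0 : frobNorm C ^ 2 = ∑ i, ∑ j, C i j ^ 2 := by
    rw [frobNorm, Real.sq_sqrt]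
    exact Finset.sum_nonneg fun i _ => Finset.sum_nonneg fun j _ => sq_nonneg _
  have h1 : ∀ i, (C *ᵥ sw A i) ⬝ᵥ (C *ᵥ sw A i) = sw A i ⬝ᵥ ((Cᵀ * C) *ᵥ sw A i) :=
    fun i => dot_mulVec_mulVec C (sw A i) (sw A i)
  rw [h0, Finset.sum_congr rfl fun i _ => h1 i, sum_dot_eq_trace]
  rw [Matrix.trace]
  simp only [diag_apply, mul_apply, transpose_apply]
  rw [Finset.sum_comm]
  exact Finset.sum_congr rfl fun i _ => Finset.sum_congr rfl fun j _ => by ring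

lemma frob_A_sq : frobNorm A ^ 2 = ∑ i, sμ A i := by
  rw [frob_sq_eq A A]
  exact Finset.sum_congr rfl fun i _ => by rw [sAw_dot]; simp

end Frob

section Trunc
variable (A : Matrix (Fin m) (Fin n) ℝ)

noncomputable def Pmat (k : ℕ) : Matrix (Fin n) (Fin n) ℝ :=
  ∑ i ∈ Finset.univ.filter (fun i : Fin n => (i : ℕ) < k), vecMulVec (sw A i) (sw A i)

noncomputable def Bmat (k : ℕ) : Matrix (Fin m) (Fin n) ℝ := A * Pmat A k

lemma vecMulVec_mulVec' (u v x : Fin n → ℝ) :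
    vecMulVec u v *ᵥ x = (v ⬝ᵥ x) • u := by
  ext j
  simp only [vecMulVec, mulVec, dotProduct, Pi.smul_apply, smul_eq_mul, Finset.sum_mul,
    Matrix.of_apply]
  exact Finset.sum_congr rfl fun i _ => by ring

lemma Pmat_mulVec (k : ℕ) (x : Fin n → ℝ) :
    Pmat A k *ᵥ x = ∑ i ∈ Finset.univ.filter (fun i : Fin n => (i : ℕ) < k),
      (sw A i ⬝ᵥ x) • sw A i := by
  rw [Pmat]
  induction (Finset.univ.filter (fun i : Fin n => (i : ℕ) < k)) using Finset.induction_on with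
  | empty => simp [Matrix.zero_mulVec]
  | insert a s h ih =>
      rw [Finset.sum_insert h, Finset.sum_insert h, Matrix.add_mulVec, vecMulVec_mulVec', ih]

lemma Bmat_mulVec (k : ℕ) (x : Fin n → ℝ) :
    Bmat A k *ᵥ x = ∑ i ∈ Finset.univ.filter (fun i : Fin n => (i : ℕ) < k),
      (sw A i ⬝ᵥ x) • (A *ᵥ sw A i) := by
  rw [Bmat, ← Matrix.mulVec_mulVec, Pmat_mulVec, ← mulVecLin_apply, map_sum]
  exact Finset.sum_congr rfl fun i _ => by rw [_root_.map_smul, mulVecLin_apply]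

lemma card_filter_lt (k : ℕ) :
    (Finset.univ.filter (fun i : Fin n => (i : ℕ) < k)).card ≤ k := by
  classical
  have := Finset.card_le_card_of_injOn (f := fun i : Fin n => (i : ℕ))
    (s := Finset.univ.filter (fun i : Fin n => (i : ℕ) < k)) (t := Finset.range k)
    (fun i hi => by simp only [Finset.mem_coe, Finset.mem_range]; exact (Finset.mem_filter.mp hi).2)
    (fun a _ b _ h => Fin.val_injective h)
  simpa using this

lemma Bmat_rank_le (k : ℕ) : (Bmat A k).rank ≤ k := by
  classical
  set S := Finset.univ.filter (fun i : Fin n => (i : ℕ) < k) with hS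
  have hsub : LinearMap.range (Bmat A k).mulVecLin ≤
      Submodule.span ℝ (S.image (fun i => A *ᵥ sw A i) : Set (Fin m → ℝ)) := by
    rintro y ⟨x, rfl⟩
    rw [mulVecLin_apply, Bmat_mulVec]
    refine Submodule.sum_mem _ fun i hi => Submodule.smul_mem _ _ ?_
    refine Submodule.subset_span ?_
    simp only [Finset.coe_image, Set.mem_image, Finset.mem_coe]
    exact ⟨i, hi, rfl⟩
  have h1 : (Bmat A k).rank ≤ (S.image (fun i => A *ᵥ sw A i)).card := by
    rw [Matrix.rank]
    exact le_trans (Submodule.finrank_mono hsub) (finrank_span_finset_le_card _)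
  exact le_trans h1 (le_trans (Finset.card_image_le) (card_filter_lt k))

lemma sub_Bmat_mulVec_sw (k : ℕ) (j : Fin n) :
    (A - Bmat A k) *ᵥ sw A j = if (j : ℕ) < k then 0 else A *ᵥ sw A j := by
  rw [Matrix.sub_mulVec, Bmat_mulVec]
  have h : ∑ i ∈ Finset.univ.filter (fun i : Fin n => (i : ℕ) < k),
      (sw A i ⬝ᵥ sw A j) • (A *ᵥ sw A i)
      = if (j : ℕ) < k then A *ᵥ sw A j else 0 := by
    rw [Finset.sum_congr rfl (fun i _ => by rw [sw_dot, ite_smul, one_smul, zero_smul])]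
    rw [Finset.sum_ite_eq' (Finset.univ.filter (fun i : Fin n => (i : ℕ) < k)) j
      (fun i => A *ᵥ sw A i)]
    simp
  rw [h]
  by_cases hj : (j : ℕ) < k <;> simp [hj]

end Trunc


section Trunc2
variable (A : Matrix (Fin m) (Fin n) ℝ)

lemma frob_sub_Bmat (k : ℕ) :
    frobNorm (A - Bmat A k) ^ 2
      = ∑ i ∈ Finset.univ.filter (fun i : Fin n => ¬ (i : ℕ) < k), sμ A i := by
  rw [frob_sq_eq A (A - Bmat A k)]
  have h : ∀ i : Fin n, ((A - Bmat A k) *ᵥ sw A i) ⬝ᵥ ((A - Bmat A k) *ᵥ sw A i)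
      = if (i : ℕ) < k then 0 else sμ A i := by
    intro i
    rw [sub_Bmat_mulVec_sw]
    by_cases hi : (i : ℕ) < k
    · simp [hi]
    · simp only [hi, if_false]
      rw [sAw_dot]; simp
  rw [Finset.sum_congr rfl fun i _ => h i, Finset.sum_ite, Finset.sum_const_zero, zero_add]

lemma dotProduct_finset_sum {N : ℕ} {ι : Type*} (v : Fin N → ℝ) (s : Finset ι)
    (f : ι → Fin N → ℝ) : v ⬝ᵥ (∑ i ∈ s, f i) = ∑ i ∈ s, v ⬝ᵥ f i := by
  simp only [dotProduct, Finset.sum_apply, Finset.mul_sum]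
  rw [Finset.sum_comm]

lemma dcoeff_sub (k : ℕ) (x : Fin n → ℝ) (i : Fin n) :
    sw A i ⬝ᵥ (x - Pmat A k *ᵥ x) = if (i : ℕ) < k then 0 else sw A i ⬝ᵥ x := by
  rw [dotProduct_sub, Pmat_mulVec, dotProduct_finset_sum]
  have h : ∀ l : Fin n, sw A i ⬝ᵥ ((sw A l ⬝ᵥ x) • sw A l)
      = if l = i then sw A i ⬝ᵥ x else 0 := by
    intro l
    rw [dotProduct_smul, smul_eq_mul, sw_dot]
    by_cases hl : l = i
    · simp [hl, sw_dot, dotProduct_comm]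
    · simp only [hl, if_false, mul_zero]
      rw [if_neg (fun h : i = l => hl h.symm), mul_zero]
  rw [Finset.sum_congr rfl fun l _ => h l, Finset.sum_ite_eq'
    (Finset.univ.filter (fun i : Fin n => (i : ℕ) < k)) i (fun _ => sw A i ⬝ᵥ x)]
  by_cases hi : (i : ℕ) < k <;> simp [hi]

end Trunc2

section Spec1
variable (A : Matrix (Fin m) (Fin n) ℝ)

lemma specNorm_sub_Bmat_le (k : ℕ) (hk : k < n) :
    specNorm (A - Bmat A k) ≤ Real.sqrt (sμ A ⟨k, hk⟩) := by
  refine specNorm_le_of _ _ (Real.sqrt_nonneg _) fun x => ?_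
  rw [Real.sq_sqrt (sμ_nonneg A _)]
  have hsub : (A - Bmat A k) *ᵥ x = A *ᵥ (x - Pmat A k *ᵥ x) := by
    rw [Matrix.sub_mulVec, Matrix.mulVec_sub, Bmat, ← Matrix.mulVec_mulVec]
  rw [hsub, mulVec_dot_eq]
  have hterm : ∀ i : Fin n, (sw A i ⬝ᵥ (x - Pmat A k *ᵥ x)) ^ 2 * sμ A i
      ≤ sμ A ⟨k, hk⟩ * (sw A i ⬝ᵥ x) ^ 2 := by
    intro i
    rw [dcoeff_sub]
    by_cases hi : (i : ℕ) < k
    · simp only [hi, if_true]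
      have := mul_nonneg (sμ_nonneg A ⟨k, hk⟩) (sq_nonneg (sw A i ⬝ᵥ x))
      simpa using this
    · simp only [hi, if_false]
      have hle : sμ A i ≤ sμ A ⟨k, hk⟩ := by
        refine sμ_antitone A ?_
        exact Fin.mk_le_of_le_val (le_of_not_gt hi)
      calc (sw A i ⬝ᵥ x) ^ 2 * sμ A i ≤ (sw A i ⬝ᵥ x) ^ 2 * sμ A ⟨k, hk⟩ :=
            mul_le_mul_of_nonneg_left hle (sq_nonneg _)
        _ = sμ A ⟨k, hk⟩ * (sw A i ⬝ᵥ x) ^ 2 := mul_comm _ _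
  calc ∑ i, (sw A i ⬝ᵥ (x - Pmat A k *ᵥ x)) ^ 2 * sμ A i
      ≤ ∑ i, sμ A ⟨k, hk⟩ * (sw A i ⬝ᵥ x) ^ 2 := Finset.sum_le_sum fun i _ => hterm i
    _ = sμ A ⟨k, hk⟩ * (x ⬝ᵥ x) := by rw [← Finset.mul_sum, ← parseval]

end Spec1

section Spec2
variable (A : Matrix (Fin m) (Fin n) ℝ)

lemma sqrt_smu_le_specNorm_sub (k : ℕ) (hk : k < n) (B : Matrix (Fin m) (Fin n) ℝ)
    (hB : B.rank ≤ k) : Real.sqrt (sμ A ⟨k, hk⟩) ≤ specNorm (A - B) := by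
  classical
  have hk1 : k + 1 ≤ n := hk
  set u : Fin (k+1) → (Fin n → ℝ) := fun t => sw A (Fin.castLE hk1 t) with hu
  -- linear independence of u
  have hli : LinearIndependent ℝ u := by
    rw [Fintype.linearIndependent_iff]
    intro g hg t
    have h0 : u t ⬝ᵥ (∑ s, g s • u s) = g t := by
      rw [dotProduct_finset_sum]
      have : ∀ s, u t ⬝ᵥ (g s • u s) = if s = t then g t else 0 := by
        intro s
        rw [dotProduct_smul, smul_eq_mul, hu]
        simp only
        rw [sw_dot]
        by_cases hs : s = t
        · simp [hs]
        · rw [if_neg (fun h : Fin.castLE hk1 t = Fin.castLE hk1 s =>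
            hs ((Fin.castLE_injective hk1 h).symm)), mul_zero, if_neg hs]
      rw [Finset.sum_congr rfl fun s _ => this s, Finset.sum_ite_eq' Finset.univ t
        (fun _ => g t), if_pos (Finset.mem_univ t)]
    rw [hg] at h0
    simp only [dotProduct_zero] at h0
    exact h0.symm
  set W := Submodule.span ℝ (Set.range u) with hW
  set K := LinearMap.ker B.mulVecLin with hK
  have hWrank : Module.finrank ℝ W = k + 1 := by
    rw [hW, finrank_span_eq_card hli, Fintype.card_fin]
  have hpin : Module.finrank ℝ (Fin n → ℝ) = n := by
    rw [Module.finrank_pi, Fintype.card_fin]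
  have hKrank : Module.finrank ℝ K + B.rank = n := by
    have := LinearMap.finrank_range_add_finrank_ker B.mulVecLin
    rw [hpin] at this
    rw [hK, Matrix.rank]
    omega
  have hsup : Module.finrank ℝ ↥(K ⊔ W) ≤ n := le_trans (Submodule.finrank_le _) hpin.le
  have hdim := Submodule.finrank_sup_add_finrank_inf_eq K W
  have hinf : 0 < Module.finrank ℝ ↥(K ⊓ W) := by omega
  have hne : K ⊓ W ≠ ⊥ := by
    intro hbot
    rw [hbot, finrank_bot] at hinf
    omega
  obtain ⟨x, hxmem, hxne⟩ := Submodule.exists_mem_ne_zero_of_ne_bot hne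
  have hxK : x ∈ K := hxmem.1
  have hxW : x ∈ W := hxmem.2
  obtain ⟨c, hc⟩ := (Submodule.mem_span_range_iff_exists_fun ℝ).mp hxW
  -- coefficients vanish for large index
  have hcoef : ∀ i : Fin n, k < (i : ℕ) → sw A i ⬝ᵥ x = 0 := by
    intro i hi
    rw [← hc, dotProduct_finset_sum]
    refine Finset.sum_eq_zero fun t _ => ?_
    rw [dotProduct_smul, smul_eq_mul, hu]
    simp only
    rw [sw_dot, if_neg, mul_zero]
    intro h
    rw [h] at hi
    simp only [Fin.coe_castLE] at hi
    omega
  have hBx : B *ᵥ x = 0 := hxK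
  have hAx : (A - B) *ᵥ x = A *ᵥ x := by
    rw [Matrix.sub_mulVec, hBx, sub_zero]
  have hxpos : 0 < x ⬝ᵥ x := by
    rcases lt_or_eq_of_le (dot_self_nonneg x) with h | h
    · exact h
    · exfalso; exact hxne ((dotProduct_self_eq_zero).mp h.symm)
  have hlow : sμ A ⟨k, hk⟩ * (x ⬝ᵥ x) ≤ (A *ᵥ x) ⬝ᵥ (A *ᵥ x) := by
    rw [mulVec_dot_eq, parseval A x, Finset.mul_sum]
    refine Finset.sum_le_sum fun i _ => ?_
    by_cases hi : k < (i : ℕ)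
    · rw [hcoef i hi]
      simp
    · have hle : sμ A ⟨k, hk⟩ ≤ sμ A i := by
        refine sμ_antitone A ?_
        exact Fin.le_def.mpr (by simp; omega)
      calc sμ A ⟨k, hk⟩ * (sw A i ⬝ᵥ x) ^ 2 ≤ sμ A i * (sw A i ⬝ᵥ x) ^ 2 :=
            mul_le_mul_of_nonneg_right hle (sq_nonneg _)
        _ = (sw A i ⬝ᵥ x) ^ 2 * sμ A i := mul_comm _ _
  have h1 : Real.sqrt (sμ A ⟨k, hk⟩) * Real.sqrt (x ⬝ᵥ x)
      ≤ specNorm (A - B) * Real.sqrt (x ⬝ᵥ x) := by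
    calc Real.sqrt (sμ A ⟨k, hk⟩) * Real.sqrt (x ⬝ᵥ x)
        = Real.sqrt (sμ A ⟨k, hk⟩ * (x ⬝ᵥ x)) :=
          (Real.sqrt_mul (sμ_nonneg A _) _).symm
      _ ≤ Real.sqrt (((A - B) *ᵥ x) ⬝ᵥ ((A - B) *ᵥ x)) := by
          rw [hAx]; exact Real.sqrt_le_sqrt hlow
      _ ≤ specNorm (A - B) * Real.sqrt (x ⬝ᵥ x) := le_specNorm (A - B) x
  exact le_of_mul_le_mul_right h1 (Real.sqrt_pos.mpr hxpos)

end Spec2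

section Sval
variable (A : Matrix (Fin m) (Fin n) ℝ)

lemma sval_bddBelow (j : ℕ) :
    BddBelow {c | ∃ B : Matrix (Fin m) (Fin n) ℝ, B.rank < j ∧ specNorm (A - B) = c} :=
  ⟨0, fun c ⟨B, _, hc⟩ => hc ▸ specNorm_nonneg _⟩

lemma sval_set_nonempty (j : ℕ) (hj : 0 < j) :
    Set.Nonempty {c | ∃ B : Matrix (Fin m) (Fin n) ℝ, B.rank < j ∧ specNorm (A - B) = c} :=
  ⟨specNorm (A - 0), 0, by rwa [Matrix.rank_zero], rfl⟩

lemma sval_nonneg (j : ℕ) (hj : 0 < j) : 0 ≤ sval A j := by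
  rw [sval]
  exact le_csInf (sval_set_nonempty A j hj) (fun c ⟨B, _, hc⟩ => hc ▸ specNorm_nonneg _)

lemma sval_eq (j : ℕ) (hj : j < n) : sval A (j + 1) = Real.sqrt (sμ A ⟨j, hj⟩) := by
  refine le_antisymm ?_ ?_
  · rw [sval]
    refine le_trans (csInf_le (sval_bddBelow A (j+1)) ?_) (specNorm_sub_Bmat_le A j hj)
    exact ⟨Bmat A j, Nat.lt_succ_of_le (Bmat_rank_le A j), rfl⟩
  · rw [sval]
    refine le_csInf (sval_set_nonempty A (j+1) (Nat.succ_pos j)) ?_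
    rintro c ⟨B, hB, rfl⟩
    exact sqrt_smu_le_specNorm_sub A j hj B (Nat.lt_succ_iff.mp hB)

lemma matrank_add_le (B X : Matrix (Fin m) (Fin n) ℝ) :
    (B + X).rank ≤ B.rank + X.rank := by
  rw [Matrix.rank, Matrix.rank, Matrix.rank]
  have hle : LinearMap.range (B + X).mulVecLin ≤
      LinearMap.range B.mulVecLin ⊔ LinearMap.range X.mulVecLin := by
    rintro y ⟨x, rfl⟩
    have : (B + X).mulVecLin x = B *ᵥ x + X *ᵥ x := by
      rw [mulVecLin_apply, Matrix.add_mulVec]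
    rw [this]
    exact Submodule.add_mem_sup ⟨x, rfl⟩ ⟨x, rfl⟩
  exact le_trans (Submodule.finrank_mono hle)
    (Submodule.finrank_add_le_finrank_add_finrank _ _)

lemma sval_shift (B : Matrix (Fin m) (Fin n) ℝ) (k : ℕ) (hB : B.rank ≤ k)
    (i : ℕ) (hi : 0 < i) : sval A (i + k) ≤ sval (A - B) i := by
  refine le_of_forall_pos_le_add fun ε hε => ?_
  have hlt : sInf {c | ∃ X : Matrix (Fin m) (Fin n) ℝ, X.rank < i ∧ specNorm (A - B - X) = c}
      < sval (A - B) i + ε := by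
    rw [sval]
    exact lt_add_of_pos_right _ hε
  obtain ⟨c, ⟨X, hX, hc⟩, hclt⟩ := exists_lt_of_csInf_lt (sval_set_nonempty (A - B) i hi) hlt
  have hrank : (B + X).rank < i + k :=
    lt_of_le_of_lt (matrank_add_le B X) (by omega)
  have h1 : sval A (i + k) ≤ specNorm (A - (B + X)) := by
    rw [sval]
    exact csInf_le (sval_bddBelow A (i+k)) ⟨B + X, hrank, rfl⟩
  have h2 : A - (B + X) = A - B - X := sub_add_eq_sub_sub A B X
  rw [h2, hc] at h1
  exact le_trans h1 hclt.le

end Sval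

section Tail
variable (A : Matrix (Fin m) (Fin n) ℝ)

lemma rank_le_n : A.rank ≤ n := le_trans (Matrix.rank_le_card_width A) (Fintype.card_fin n).le

lemma smu_eq_zero_of_rank_le (i : Fin n) (hi : A.rank ≤ (i : ℕ)) : sμ A i = 0 := by
  by_contra h
  have hpos : ∀ l : Fin n, l ≤ i → (hM A).eigenvalues (sp A l) ≠ 0 := fun l hl =>
    ne_of_gt (lt_of_lt_of_le (lt_of_le_of_ne (sμ_nonneg A i) (Ne.symm h)) (sμ_antitone A hl))
  have hcard : A.rank = Fintype.card {l // (hM A).eigenvalues l ≠ 0} := by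
    rw [← Matrix.rank_transpose_mul_self A]
    exact (hM A).rank_eq_card_non_zero_eigs
  have hi1 : (i : ℕ) + 1 ≤ n := i.isLt
  set f : Fin ((i : ℕ) + 1) → {l // (hM A).eigenvalues l ≠ 0} :=
    fun t => ⟨sp A (Fin.castLE hi1 t), hpos (Fin.castLE hi1 t)
      (Fin.le_def.mpr (by simp; omega))⟩ with hf
  have hinj : Function.Injective f := by
    intro a b hab
    rw [hf] at hab
    simp only [Subtype.mk.injEq] at hab
    exact Fin.castLE_injective hi1 ((sp A).injective hab)
  have := Fintype.card_le_of_injective f hinj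
  rw [Fintype.card_fin] at this
  omega

lemma reidx (a b : ℕ) (hb : b ≤ n) :
    ∑ j ∈ Finset.Icc (a + 1) b, (if h : j - 1 < n then sμ A ⟨j - 1, h⟩ else 0)
      = ∑ i ∈ Finset.univ.filter (fun i : Fin n => a ≤ (i : ℕ) ∧ (i : ℕ) < b), sμ A i := by
  classical
  refine Finset.sum_bij' (fun j hj => (⟨j - 1, by
      have := Finset.mem_Icc.mp hj; omega⟩ : Fin n))
    (fun i _ => (i : ℕ) + 1) ?_ ?_ ?_ ?_ ?_
  · intro j hj
    have := Finset.mem_Icc.mp hj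
    simp only [Finset.mem_filter, Finset.mem_univ, true_and]
    exact ⟨by show a ≤ j - 1; omega, by show j - 1 < b; omega⟩
  · intro i hi
    simp only [Finset.mem_filter, Finset.mem_univ, true_and] at hi
    rw [Finset.mem_Icc]
    show a + 1 ≤ (i : ℕ) + 1 ∧ (i : ℕ) + 1 ≤ b
    omega
  · intro j hj
    have := Finset.mem_Icc.mp hj
    show j - 1 + 1 = j
    omega
  · intro i hi
    simp only [Finset.mem_filter, Finset.mem_univ, true_and] at hi
    apply Fin.ext
    simp
  · intro j hj
    have := Finset.mem_Icc.mp hj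
    rw [dif_pos (by omega : j - 1 < n)]

end Tail


end EYaux

/-- Eckart–Young, Frobenius norm: for any B of rank at most k,
‖A − B‖_F² ≥ Σ_{j=k+1}^{rank A} σⱼ(A)², with equality attained by the rank-k
truncated SVD. -/
theorem eckart_young_frobenius {m n : ℕ} (A : Matrix (Fin m) (Fin n) ℝ) (k : ℕ) :
    (∀ B : Matrix (Fin m) (Fin n) ℝ, B.rank ≤ k →
      ∑ j ∈ Finset.Icc (k + 1) A.rank, sval A j ^ 2 ≤ frobNorm (A - B) ^ 2) ∧
    (∃ B : Matrix (Fin m) (Fin n) ℝ, B.rank ≤ k ∧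
      frobNorm (A - B) ^ 2 = ∑ j ∈ Finset.Icc (k + 1) A.rank, sval A j ^ 2) := by
  classical
  have hρn : A.rank ≤ n := rank_le_n A
  have hfrob_nonneg : ∀ C : Matrix (Fin m) (Fin n) ℝ, 0 ≤ frobNorm C ^ 2 :=
    fun C => pow_nonneg (Real.sqrt_nonneg _) 2
  -- sval squared equals the dite expression for 1 ≤ j ≤ n
  have hsq : ∀ (C : Matrix (Fin m) (Fin n) ℝ) (j : ℕ), 1 ≤ j → j ≤ n →
      sval C j ^ 2 = (if h : j - 1 < n then sμ C ⟨j - 1, h⟩ else 0) := by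
    intro C j h1 h2
    obtain ⟨t, rfl⟩ : ∃ t, j = t + 1 := ⟨j - 1, by omega⟩
    have hlt : t < n := by omega
    rw [dif_pos (by omega : t + 1 - 1 < n)]
    have he : (⟨t + 1 - 1, by omega⟩ : Fin n) = ⟨t, hlt⟩ := by
      apply Fin.ext; simp
    rw [he, sval_eq C t hlt, Real.sq_sqrt (sμ_nonneg C _)]
  -- the common value of the RHS sum
  have key : ∑ j ∈ Finset.Icc (k + 1) A.rank, sval A j ^ 2
      = ∑ i ∈ Finset.univ.filter (fun i : Fin n => k ≤ (i : ℕ) ∧ (i : ℕ) < A.rank),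
          sμ A i := by
    rw [Finset.sum_congr rfl (fun j hj => by
      have := Finset.mem_Icc.mp hj
      exact hsq A j (by omega) (by omega))]
    exact reidx A k A.rank hρn
  constructor
  · -- inequality
    intro B hB
    by_cases hkρ : A.rank ≤ k
    · rw [Finset.Icc_eq_empty (by omega), Finset.sum_empty]
      exact hfrob_nonneg _
    · push_neg at hkρ
      have h1 : ∑ j ∈ Finset.Icc (k + 1) A.rank, sval A j ^ 2
          = ∑ i ∈ Finset.Icc 1 (A.rank - k), sval A (i + k) ^ 2 := by
        refine Finset.sum_bij' (fun j _ => j - k) (fun i _ => i + k) ?_ ?_ ?_ ?_ ?_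
        · intro j hj
          have := Finset.mem_Icc.mp hj
          rw [Finset.mem_Icc]
          show 1 ≤ j - k ∧ j - k ≤ A.rank - k
          omega
        · intro i hi
          have := Finset.mem_Icc.mp hi
          rw [Finset.mem_Icc]
          show k + 1 ≤ i + k ∧ i + k ≤ A.rank
          omega
        · intro j hj
          have := Finset.mem_Icc.mp hj
          show j - k + k = j
          omega
        · intro i hi
          have := Finset.mem_Icc.mp hi
          show i + k - k = i
          omega
        · intro j hj
          have := Finset.mem_Icc.mp hj
          show sval A j ^ 2 = sval A (j - k + k) ^ 2
          congr 2
          omega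
      have h2 : ∑ i ∈ Finset.Icc 1 (A.rank - k), sval A (i + k) ^ 2
          ≤ ∑ i ∈ Finset.Icc 1 (A.rank - k), sval (A - B) i ^ 2 := by
        refine Finset.sum_le_sum fun i hi => ?_
        have hi1 := (Finset.mem_Icc.mp hi).1
        have hle := sval_shift A B k hB i (by omega)
        have hnn := sval_nonneg A (i + k) (by omega)
        exact pow_le_pow_left₀ hnn hle 2
      have h3 : ∑ i ∈ Finset.Icc 1 (A.rank - k), sval (A - B) i ^ 2
          ≤ ∑ i ∈ Finset.Icc 1 n, sval (A - B) i ^ 2 := by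
        refine Finset.sum_le_sum_of_subset_of_nonneg ?_ ?_
        · exact Finset.Icc_subset_Icc le_rfl (by omega)
        · intro i hi _
          have hi1 := (Finset.mem_Icc.mp hi).1
          exact pow_nonneg (sval_nonneg (A - B) i (by omega)) 2
      have h4 : ∑ i ∈ Finset.Icc 1 n, sval (A - B) i ^ 2 = frobNorm (A - B) ^ 2 := by
        rw [Finset.sum_congr rfl (fun j hj => by
          have := Finset.mem_Icc.mp hj
          exact hsq (A - B) j (by omega) (by omega))]
        have h5 := reidx (A - B) 0 n le_rfl
        rw [show (0 + 1) = 1 from rfl] at h5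
        rw [h5, frob_A_sq (A - B)]
        refine Finset.sum_congr ?_ (fun _ _ => rfl)
        refine Finset.filter_true_of_mem fun i _ => ⟨Nat.zero_le _, i.isLt⟩
      calc ∑ j ∈ Finset.Icc (k + 1) A.rank, sval A j ^ 2
          = ∑ i ∈ Finset.Icc 1 (A.rank - k), sval A (i + k) ^ 2 := h1
        _ ≤ ∑ i ∈ Finset.Icc 1 (A.rank - k), sval (A - B) i ^ 2 := h2
        _ ≤ ∑ i ∈ Finset.Icc 1 n, sval (A - B) i ^ 2 := h3
        _ = frobNorm (A - B) ^ 2 := h4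
  · -- equality via truncated SVD
    refine ⟨Bmat A k, Bmat_rank_le A k, ?_⟩
    rw [frob_sub_Bmat A k, key]
    refine (Finset.sum_subset ?_ ?_).symm
    · intro i hi
      simp only [Finset.mem_filter, Finset.mem_univ, true_and] at hi ⊢
      omega
    · intro i hi hni
      simp only [Finset.mem_filter, Finset.mem_univ, true_and] at hi hni
      push_neg at hni
      exact smu_eq_zero_of_rank_le A i (by omega)
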